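/- Let (X, R) be a set system with VC-dimension d < ∞ and let k ≥ 1. Then the VC-dimension of the k-fold union R^{k∪} is at most c·d·k·log₂(k+1) for some absolute constant c (e.g., one may take the bound 2dk·log₂(3k)). -/

import Mathlib

def Shatters {X : Type*} (R : Set (Set X)) (Y : Set X) : Prop :=
  ∀ Z ⊆ Y, ∃ S ∈ R, Y ∩ S = Z

noncomputable def VCdim {X : Type*} (R : Set (Set X)) : ℕ∞ :=
  ⨆ (Y : Finset X) (_ : Shatters R ↑Y), (Y.card : ℕ∞)

def kUnion {X : Type*} (R : Set (Set X)) (k : ℕ) : Set (Set X) :=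
  {T | ∃ f : Fin k → Set X, (∀ i, f i ∈ R) ∧ T = ⋃ i, f i}

set_option maxHeartbeats 2000000 in
/-- Blumer–Ehrenfeucht–Haussler–Warmuth upper bound: there is an absolute
constant `c > 0` such that for any set system of VC-dimension at most `d` and
any `k ≥ 1`, the `k`-fold union has VC-dimension at most `c·d·k·log₂(k+1)`. -/
theorem vcdim_kUnion_upper :
    ∃ c : ℝ, 0 < c ∧
      ∀ (X : Type) (R : Set (Set X)) (d k : ℕ), 1 ≤ d → 1 ≤ k →
        VCdim R ≤ (d : ℕ∞) →
        ∀ Y : Finset X, Shatters (kUnion R k) ↑Y →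
          (Y.card : ℝ) ≤ c * d * k * Real.logb 2 (k + 1) := by
  classical
  refine ⟨8, by norm_num, ?_⟩
  intro X R d k hd hk hVC Y hY
  set m := Y.card with hm
  -- the trace family of R on Y
  set F : Finset (Finset X) :=
    Y.powerset.filter (fun B => ∃ S ∈ R, (↑Y : Set X) ∩ S = ↑B) with hFdef
  -- Step 1 : 2^m ≤ F.card ^ k
  have key : ∀ Z : Finset X, ∃ g : Fin k → Set X,
      Z ⊆ Y → (∀ i, g i ∈ R) ∧ (↑Y : Set X) ∩ (⋃ i, g i) = ↑Z := by
    intro Z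
    by_cases hZ : Z ⊆ Y
    · obtain ⟨T, hT, hYT⟩ := hY (↑Z) (by exact_mod_cast hZ)
      obtain ⟨f, hf, rfl⟩ := hT
      exact ⟨f, fun _ => ⟨hf, hYT⟩⟩
    · exact ⟨fun _ => ∅, fun h => absurd h hZ⟩
  choose g hg using key
  set G : Finset X → (Fin k → Finset X) :=
    fun Z => fun i => Y.filter (· ∈ g Z i) with hGdef
  have hGmem : ∀ Z ∈ Y.powerset, ∀ i, G Z i ∈ F := by
    intro Z hZ i
    obtain ⟨h1, _⟩ := hg Z (Finset.mem_powerset.1 hZ)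
    refine Finset.mem_filter.2 ⟨Finset.mem_powerset.2 (Finset.filter_subset _ _), g Z i, h1 i, ?_⟩
    ext a; simp [hGdef]
  have hGsup : ∀ Z ∈ Y.powerset, Finset.univ.sup (G Z) = Z := by
    intro Z hZ
    obtain ⟨_, h2⟩ := hg Z (Finset.mem_powerset.1 hZ)
    have hZY := Finset.mem_powerset.1 hZ
    ext a
    simp only [Finset.mem_sup, Finset.mem_univ, true_and, hGdef, Finset.mem_filter]
    constructor
    · rintro ⟨i, haY, hai⟩
      have : a ∈ (↑Y : Set X) ∩ (⋃ i, g Z i) := ⟨haY, Set.mem_iUnion.2 ⟨i, hai⟩⟩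
      rw [h2] at this; exact this
    · intro haZ
      have : a ∈ (↑Y : Set X) ∩ (⋃ i, g Z i) := h2 ▸ haZ
      obtain ⟨haY, hmem⟩ := this
      obtain ⟨i, hi⟩ := Set.mem_iUnion.1 hmem
      exact ⟨i, haY, hi⟩
  have step1 : 2 ^ m ≤ F.card ^ k := by
    have hcard : Y.powerset.card ≤ (Fintype.piFinset (fun _ : Fin k => F)).card := by
      apply Finset.card_le_card_of_injOn G
      · intro Z hZ
        exact Fintype.mem_piFinset.2 (hGmem Z hZ)
      · intro Z hZ Z' hZ' hGG
        rw [← hGsup Z hZ, ← hGsup Z' hZ', hGG]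
    rwa [Finset.card_powerset, Fintype.card_piFinset, Finset.prod_const,
      Finset.card_univ, Fintype.card_fin] at hcard
  -- Step 2 : F.card ≤ number of subsets of Y of size ≤ d
  have hBd : ∀ B : Finset X, Shatters R ↑B → B.card ≤ d := by
    intro B hB
    have h1 : (B.card : ℕ∞) ≤ VCdim R :=
      le_iSup₂ (f := fun (Y : Finset X) (_ : Shatters R ↑Y) => (Y.card : ℕ∞)) B hB
    exact_mod_cast h1.trans hVC
  set Φ : Finset (Finset X) := Y.powerset.filter (fun B => B.card ≤ d) with hΦdef
  have step2 : F.card ≤ Φ.card := by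
    refine (Finset.card_le_card_shatterer F).trans (Finset.card_le_card ?_)
    intro B hB
    rw [Finset.mem_shatterer] at hB
    have hBY : B ⊆ Y := by
      obtain ⟨u, hu, hBu⟩ := hB.exists_superset
      exact hBu.trans (Finset.mem_powerset.1 (Finset.mem_filter.1 hu).1)
    have hShat : Shatters R ↑B := by
      intro Z hZ
      set t : Finset X := B.filter (· ∈ Z) with ht
      have htZ : (↑t : Set X) = Z := by
        ext a
        simp only [ht, Finset.coe_filter, Set.mem_setOf_eq]
        exact ⟨fun h => h.2, fun h => ⟨hZ h, h⟩⟩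
      obtain ⟨u, hu, hBu⟩ := hB (Finset.filter_subset _ _ : t ⊆ B)
      obtain ⟨hupow, S, hS, hYS⟩ := Finset.mem_filter.1 hu
      refine ⟨S, hS, ?_⟩
      have : (↑B : Set X) ∩ S = ↑(B ∩ u) := by
        rw [Finset.coe_inter, ← hYS]
        ext a
        simp only [Set.mem_inter_iff, Finset.mem_coe]
        exact ⟨fun ⟨h1, h2⟩ => ⟨h1, hBY h1, h2⟩, fun ⟨h1, _, h3⟩ => ⟨h1, h3⟩⟩
      rw [this, hBu, htZ]
    exact Finset.mem_filter.2 ⟨Finset.mem_powerset.2 hBY, hBd B hShat⟩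
  -- Step 3 : the polynomial bound  Φ.card * x^d ≤ (1+x)^m  for 0 < x ≤ 1
  have step3 : ∀ x : ℝ, 0 < x → x ≤ 1 → (Φ.card : ℝ) * x ^ d ≤ (1 + x) ^ m := by
    intro x hx0 hx1
    have h1 : (Φ.card : ℝ) * x ^ d = ∑ _B ∈ Φ, x ^ d := by
      rw [Finset.sum_const, nsmul_eq_mul]
    have h2 : ∑ _B ∈ Φ, x ^ d ≤ ∑ B ∈ Φ, x ^ B.card := by
      refine Finset.sum_le_sum fun B hB => ?_
      exact pow_le_pow_of_le_one hx0.le hx1 (Finset.mem_filter.1 hB).2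
    have h3 : ∑ B ∈ Φ, x ^ B.card ≤ ∑ B ∈ Y.powerset, x ^ B.card := by
      refine Finset.sum_le_sum_of_subset_of_nonneg (Finset.filter_subset _ _) ?_
      intro B _ _; positivity
    have h4 : ∑ B ∈ Y.powerset, x ^ B.card = (1 + x) ^ m := by
      have := Finset.prod_add (fun _ : X => x) (fun _ : X => (1 : ℝ)) Y
      simp only [Finset.prod_const, one_pow, mul_one] at this
      rw [← hm] at this
      rw [← this]
      ring_nf
    linarith
  -- Now the analytic part
  have hd1 : (1 : ℝ) ≤ d := by exact_mod_cast hd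
  have hk1 : (1 : ℝ) ≤ k := by exact_mod_cast hk
  have hl2pos : (0 : ℝ) < Real.log 2 := Real.log_pos (by norm_num)
  have hl2lb : (0.6931471803 : ℝ) < Real.log 2 := Real.log_two_gt_d9
  have hl2ub : Real.log 2 < 0.6931471808 := Real.log_two_lt_d9
  have hlk1 : Real.log 2 ≤ Real.log (k + 1) := Real.log_le_log (by norm_num) (by linarith)
  have hlogb1 : (1 : ℝ) ≤ Real.logb 2 (k + 1) := by
    rw [Real.logb, le_div_iff₀ hl2pos]; linarith
  by_cases hcase : (m : ℝ) ≤ 4 * d * k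
  · have : (0:ℝ) ≤ 4 * d * k := by positivity
    nlinarith
  push_neg at hcase
  -- hard case : m > 4dk
  have hmpos : (0 : ℝ) < m := by nlinarith
  have hdm : (d : ℝ) ≤ m := by nlinarith
  set x : ℝ := (d : ℝ) / m with hxdef
  have hx0 : 0 < x := by positivity
  have hx1 : x ≤ 1 := by rw [hxdef, div_le_one hmpos]; exact hdm
  have hexp : ((1 : ℝ) + x) ^ m ≤ Real.exp d := by
    calc ((1 : ℝ) + x) ^ m ≤ Real.exp x ^ m := by
          apply pow_le_pow_left₀ (by positivity)
          linarith [Real.add_one_le_exp x]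
      _ = Real.exp (x * m) := by rw [← Real.exp_nat_mul]; ring_nf
      _ = Real.exp d := by rw [hxdef]; congr 1; field_simp
  have hΦreal : (Φ.card : ℝ) ≤ Real.exp d / x ^ d := by
    rw [le_div_iff₀ (by positivity)]
    exact (step3 x hx0 hx1).trans hexp
  have hFreal : (F.card : ℝ) ≤ Real.exp d / x ^ d := le_trans (by exact_mod_cast step2) hΦreal
  have hmain : (2 : ℝ) ^ m ≤ (Real.exp d / x ^ d) ^ k := by
    calc (2 : ℝ) ^ m ≤ (F.card : ℝ) ^ k := by exact_mod_cast step1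
      _ ≤ (Real.exp d / x ^ d) ^ k := pow_le_pow_left₀ (by positivity) hFreal k
  -- take logarithms
  have hlogmain : (m : ℝ) * Real.log 2 ≤ k * (d - d * Real.log x) := by
    have h1 : Real.log ((2 : ℝ) ^ m) ≤ Real.log ((Real.exp d / x ^ d) ^ k) :=
      Real.log_le_log (by positivity) hmain
    rw [Real.log_pow, Real.log_pow, Real.log_div (Real.exp_ne_zero _) (by positivity),
      Real.log_exp, Real.log_pow] at h1
    push_cast at h1 ⊢
    linarith
  have hlogx : Real.log x = Real.log d - Real.log m := by
    rw [hxdef, Real.log_div (by positivity) (by positivity)]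
  set u : ℝ := (m : ℝ) / (d * k) with hudef
  have hdk : (0 : ℝ) < (d : ℝ) * k := by positivity
  have hu4 : 4 < u := by rw [hudef, lt_div_iff₀ hdk]; nlinarith
  have hmu : (m : ℝ) = u * ((d : ℝ) * k) := by rw [hudef]; field_simp
  have hlogm : Real.log m - Real.log d = Real.log u + Real.log k := by
    have h1 : (m : ℝ) / d = u * k := by rw [hudef]; field_simp
    have h2 : Real.log ((m : ℝ) / d) = Real.log m - Real.log d :=
      Real.log_div hmpos.ne' (ne_of_gt (by linarith))
    rw [← h2, h1, Real.log_mul (ne_of_gt (by linarith)) (ne_of_gt (by linarith))]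
  have hkey : u * Real.log 2 ≤ 1 + Real.log u + Real.log k := by
    apply le_of_mul_le_mul_right _ hdk
    have h2 := hlogmain
    rw [hlogx] at h2
    have e : (k : ℝ) * (d - d * (Real.log d - Real.log m))
        = (k : ℝ) * (d * (1 + Real.log u + Real.log k)) := by
      linear_combination ((k : ℝ) * d) * hlogm
    rw [e] at h2
    have h1 : u * ((d : ℝ) * k) * Real.log 2 ≤ (k : ℝ) * (d * (1 + Real.log u + Real.log k)) := by
      rw [← hmu]; exact h2
    have e2 : u * ((d : ℝ) * k) * Real.log 2 = u * Real.log 2 * ((d : ℝ) * k) := by ring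
    have e3 : (k : ℝ) * (d * (1 + Real.log u + Real.log k))
        = (1 + Real.log u + Real.log k) * ((d : ℝ) * k) := by ring
    linarith [h1, e2.symm.le, e2.le, e3.le, e3.symm.le]
  have hlogu : Real.log u ≤ u / 4 - 1 + 2 * Real.log 2 := by
    have h1 : Real.log (u / 4) ≤ u / 4 - 1 := Real.log_le_sub_one_of_pos (by linarith)
    have h2 : Real.log (u / 4) = Real.log u - Real.log 4 := Real.log_div (by linarith) (by norm_num)
    have h3 : Real.log 4 = 2 * Real.log 2 := by
      rw [show (4 : ℝ) = 2 ^ 2 by norm_num, Real.log_pow]; push_cast; ring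
    linarith
  have hlogk : Real.log k ≤ Real.log (k + 1) := Real.log_le_log (by linarith) (by linarith)
  -- conclude
  have hfin : u * Real.log 2 ≤ 8 * Real.log (k + 1) := by
    have hu0 : (0 : ℝ) ≤ u := by linarith
    nlinarith [mul_le_mul_of_nonneg_left hl2lb.le hu0, mul_le_mul_of_nonneg_left hl2ub.le hu0]
  have hu8 : u ≤ 8 * Real.log (k + 1) / Real.log 2 := (le_div_iff₀ hl2pos).2 hfin
  calc (m : ℝ) = u * ((d : ℝ) * k) := hmu
    _ ≤ (8 * Real.log (k + 1) / Real.log 2) * ((d : ℝ) * k) :=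
        mul_le_mul_of_nonneg_right hu8 (by positivity)
    _ = 8 * d * k * Real.logb 2 (k + 1) := by rw [Real.logb]; ring
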